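/- Model the array A of the history-independent multi-valued register as a function Fin K → Bool, and define the canonical representation can v := (fun j => j = v). Define the update sequence of Write(v) as the list of single-cell updates: first set index v to true, then set indices v−1, v−2, …, 0 to false in decreasing order, then set indices v+1, v+2, …, K−1 to false in increasing order. Then for any u v : Fin K: (1) applying the full update sequence of Write(v) to can u yields can v; and (2) after applying any prefix of the update sequence of Write(v) to can u, there exists at least one index j with the array value at j equal to true. -/

import Mathlib

/-- Canonical representation of value `v`: the array that is `true` exactly at `v`. -/
def canArr {K : ℕ} (v : Fin K) : Fin K → Bool := fun j => decide (j = v)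

/-- Apply a single-cell update `(index, value)` to the array. -/
def applyUpd {K : ℕ} (A : Fin K → Bool) (u : Fin K × Bool) : Fin K → Bool :=
  Function.update A u.1 u.2

/-- The sequence of single-cell updates performed by `Write(v)`:
first set index `v` to `true`, then set indices `v-1, …, 0` to `false` in
decreasing order, then set indices `v+1, …, K-1` to `false` in increasing order. -/
def writeSeq {K : ℕ} (v : Fin K) : List (Fin K × Bool) :=
  ((v, true) : Fin K × Bool) ::
    (((List.range v.val).reverse.pmap
        (fun j (h : j < K) => ((⟨j, h⟩ : Fin K), false))
        (fun j hj =>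
          lt_trans (List.mem_range.mp (List.mem_reverse.mp hj)) v.isLt)) ++
      ((List.range K).drop (v.val + 1)).pmap
        (fun j (h : j < K) => ((⟨j, h⟩ : Fin K), false))
        (fun j hj => List.mem_range.mp (List.mem_of_mem_drop hj)))

lemma foldl_applyUpd_ne {K : ℕ} (L : List (Fin K × Bool)) :
    ∀ (A : Fin K → Bool) (j : Fin K), (∀ p ∈ L, p.1 ≠ j) →
      List.foldl applyUpd A L j = A j := by
  induction L with
  | nil => intro A j _; rfl
  | cons p L ih =>
    intro A j h
    rw [List.foldl_cons, ih _ j (fun q hq => h q (List.mem_cons_of_mem _ hq))]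
    exact Function.update_of_ne (fun hj => h p List.mem_cons_self hj.symm) _ _

lemma foldl_applyUpd_false {K : ℕ} (L : List (Fin K × Bool)) :
    ∀ (A : Fin K → Bool) (j : Fin K), (∀ p ∈ L, p.2 = false) →
      (∃ p ∈ L, p.1 = j) → List.foldl applyUpd A L j = false := by
  induction L with
  | nil => intro A j _ h; simp at h
  | cons p L ih =>
    intro A j hf hj
    rw [List.foldl_cons]
    by_cases hL : ∃ q ∈ L, q.1 = j
    · exact ih _ j (fun q hq => hf q (List.mem_cons_of_mem _ hq)) hL
    · have hp : p.1 = j := by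
        rcases hj with ⟨q, hq, hq1⟩
        rcases List.mem_cons.mp hq with rfl | hq'
        · exact hq1
        · exact absurd ⟨q, hq', hq1⟩ hL
      rw [foldl_applyUpd_ne L _ j (fun q hq hq1 => hL ⟨q, hq, hq1⟩)]
      have := hf p List.mem_cons_self
      simp only [applyUpd, this]
      rw [hp, Function.update_self]

theorem stmt_12 {K : ℕ} (u v : Fin K) :
    (List.foldl applyUpd (canArr u) (writeSeq v) = canArr v) ∧
    (∀ pre : List (Fin K × Bool), pre <+: writeSeq v →
      ∃ j : Fin K, List.foldl applyUpd (canArr u) pre j = true) := by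
  set rest := (((List.range v.val).reverse.pmap
        (fun j (h : j < K) => ((⟨j, h⟩ : Fin K), false))
        (fun j hj =>
          lt_trans (List.mem_range.mp (List.mem_reverse.mp hj)) v.isLt)) ++
      ((List.range K).drop (v.val + 1)).pmap
        (fun j (h : j < K) => ((⟨j, h⟩ : Fin K), false))
        (fun j hj => List.mem_range.mp (List.mem_of_mem_drop hj))) with hrest
  have hdrop_ge : ∀ a ∈ (List.range K).drop (v.val + 1), v.val + 1 ≤ a := by
    intro a ha
    rcases List.mem_iff_getElem.mp ha with ⟨i, hi, hg⟩
    rw [List.getElem_drop, List.getElem_range] at hg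
    omega
  have fact1 : ∀ p ∈ rest, p.2 = false := by
    intro p hp
    rw [hrest] at hp
    rcases List.mem_append.mp hp with h | h <;>
      · rcases List.mem_pmap.mp h with ⟨a, ha, rfl⟩
        rfl
  have fact2 : ∀ p ∈ rest, p.1 ≠ v := by
    intro p hp
    rw [hrest] at hp
    rcases List.mem_append.mp hp with h | h
    · rcases List.mem_pmap.mp h with ⟨a, ha, rfl⟩
      have : a < v.val := List.mem_range.mp (List.mem_reverse.mp ha)
      intro hc
      exact absurd (congrArg Fin.val hc) (by simpa using Nat.ne_of_lt this)
    · rcases List.mem_pmap.mp h with ⟨a, ha, rfl⟩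
      have : v.val + 1 ≤ a := hdrop_ge a ha
      intro hc
      have := congrArg Fin.val hc
      simp at this
      omega
  have fact3 : ∀ j : Fin K, j ≠ v → ∃ p ∈ rest, p.1 = j := by
    intro j hj
    rw [hrest]
    rcases Nat.lt_or_ge j.val v.val with hlt | hge
    · refine ⟨(⟨j.val, j.isLt⟩, false), List.mem_append_left _ ?_, by simp⟩
      exact List.mem_pmap.mpr ⟨j.val, List.mem_reverse.mpr (List.mem_range.mpr hlt), rfl⟩
    · have hgt : v.val < j.val := by
        rcases Nat.lt_or_ge v.val j.val with h | h
        · exact h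
        · exact absurd (Fin.ext (Nat.le_antisymm hge h)) hj.symm
      refine ⟨(⟨j.val, j.isLt⟩, false), List.mem_append_right _ ?_, by simp⟩
      refine List.mem_pmap.mpr ⟨j.val, ?_, rfl⟩
      apply List.mem_iff_getElem.mpr
      refine ⟨j.val - (v.val + 1), ?_, ?_⟩
      · rw [List.length_drop, List.length_range]; omega
      · rw [List.getElem_drop, List.getElem_range]; omega
  have hws : writeSeq v = ((v, true) : Fin K × Bool) :: rest := rfl
  set A1 := applyUpd (canArr u) ((v, true) : Fin K × Bool) with hA1
  have hA1v : A1 v = true := by simp [hA1, applyUpd]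
  constructor
  · rw [hws, List.foldl_cons]
    funext j
    by_cases hjv : j = v
    · subst hjv
      rw [foldl_applyUpd_ne rest A1 j (fun p hp => fact2 p hp), hA1v]
      simp [canArr]
    · rw [foldl_applyUpd_false rest A1 j fact1 (fact3 j hjv)]
      simp [canArr, hjv]
  · intro pre hpre
    rcases pre with _ | ⟨p, pre'⟩
    · exact ⟨u, by simp [canArr]⟩
    · rw [hws] at hpre
      rcases List.cons_prefix_cons.mp hpre with ⟨rfl, hpre'⟩
      refine ⟨v, ?_⟩
      rw [List.foldl_cons, ← hA1]
      rw [foldl_applyUpd_ne pre' A1 v (fun q hq => fact2 q (hpre'.subset hq))]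
      exact hA1v
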